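/- For a typical weight λ define D_λ on L(λ) by D_λv₀ = q^{λ₂²−λ₁²}·v₀ and D_λv₁ = q^{(λ₂+1)²−(λ₁−1)²}·v₁ (the action of e^{ħ(H₂²−H₁²)} on weight vectors), and the ribbon operator v_λ = (K_λ⁻¹ + (q−q^{−1})·E_λF_λ) ∘ D_λ. Then v_{(1,0)} = id on L((1,0)) (the vector representation) and v_{(0,−1)} = id on L((0,−1)) (which is isomorphic to the dual of the vector representation). -/

import Mathlib

set_option synthInstance.maxHeartbeats 1000000
set_option maxHeartbeats 1000000
noncomputable section
open scoped TensorProduct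

abbrev F : Type := RatFunc ℂ
def q : F := RatFunc.X

/-- The quantum integer [n] = (qⁿ − q⁻ⁿ)/(q − q⁻¹). -/
def qn (n : ℤ) : F := (q ^ n - q ^ (-n)) / (q - q⁻¹)

abbrev V : Type := Fin 2 → F
def v0 : V := Pi.single 0 1
def v1 : V := Pi.single 1 1

def Eop : V →ₗ[F] V := Matrix.toLin' !![0, 1; 0, 0]
def Fop (l : ℤ × ℤ) : V →ₗ[F] V := Matrix.toLin' !![0, 0; qn (l.1 + l.2), 0]
def Qop (l : ℤ × ℤ) (h : ℤ × ℤ) : V →ₗ[F] V :=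
  Matrix.toLin' !![q ^ (h.1 * l.1 + h.2 * l.2), 0; 0, q ^ (h.1 * (l.1 - 1) + h.2 * (l.2 + 1))]
def Pop (l : ℤ × ℤ) : V →ₗ[F] V :=
  Matrix.toLin' !![(-1 : F) ^ l.2, 0; 0, (-1 : F) ^ (l.2 + 1)]
def Kop (l : ℤ × ℤ) : V →ₗ[F] V := Qop l (1, 1)
def Kinv (l : ℤ × ℤ) : V →ₗ[F] V := Qop l (-1, -1)

def ΔE (l m : ℤ × ℤ) : V ⊗[F] V →ₗ[F] V ⊗[F] V :=
  TensorProduct.map Eop (Kinv m) + TensorProduct.map (Pop l) Eop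
def ΔF (l m : ℤ × ℤ) : V ⊗[F] V →ₗ[F] V ⊗[F] V :=
  TensorProduct.map (Fop l) LinearMap.id + TensorProduct.map (Kop l ∘ₗ Pop l) (Fop m)
def ΔQ (l m : ℤ × ℤ) (h : ℤ × ℤ) : V ⊗[F] V →ₗ[F] V ⊗[F] V :=
  TensorProduct.map (Qop l h) (Qop m h)

/-- The action of `e^{ħ(H₂²−H₁²)}` on `L(λ)`. -/
def Dop (l : ℤ × ℤ) : V →ₗ[F] V :=
  Matrix.toLin' !![q ^ (l.2 ^ 2 - l.1 ^ 2), 0; 0, q ^ ((l.2 + 1) ^ 2 - (l.1 - 1) ^ 2)]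

/-- The ribbon operator `v_λ = (K_λ⁻¹ + (q−q⁻¹)E_λF_λ) ∘ D_λ` on `L(λ)`. -/
def vop (l : ℤ × ℤ) : V →ₗ[F] V := (Kinv l + (q - q⁻¹) • (Eop ∘ₗ Fop l)) ∘ₗ Dop l

lemma hq : q ≠ 0 := RatFunc.X_ne_zero

lemma hq2 : q ^ 2 - 1 ≠ 0 := by
  have h : q ^ 2 - 1 = algebraMap (Polynomial ℂ) F (Polynomial.X ^ 2 - 1) := by
    simp [q, RatFunc.algebraMap_X, map_sub, map_pow]
  rw [h]
  rw [ne_eq, FaithfulSMul.algebraMap_eq_zero_iff]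
  intro hcon
  have := congrArg (Polynomial.eval 0) hcon
  simp at this

lemma hqq : q - q⁻¹ ≠ 0 := by
  intro h
  apply hq2
  have : q = q⁻¹ := sub_eq_zero.mp h
  have h2 : q * q = q * q⁻¹ := by rw [← this]
  rw [mul_inv_cancel₀ hq] at h2
  rw [sq, h2, sub_self]

lemma hq3 : -q + q ^ 3 ≠ 0 := by
  have h := mul_ne_zero hq hq2
  intro h0; apply h; rw [← h0]; ring

lemma qn_one : qn 1 = 1 := by
  simp only [qn, zpow_one, Int.reduceNeg, zpow_neg]
  exact div_self hqq

lemma qn_neg_one : qn (-1) = -1 := by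
  simp only [qn, Int.reduceNeg, zpow_neg, zpow_one, neg_neg]
  rw [div_eq_iff hqq]; ring

/-- the ribbon element acts as the identity on the vector
representation `L((1,0))` and on its dual `L((0,−1))`. -/
theorem ribbon_acts_trivially :
    vop (1, 0) = LinearMap.id ∧ vop (0, -1) = LinearMap.id := by
  constructor
  · apply LinearMap.ext; intro v; funext i
    fin_cases i <;>
      simp [vop, Kinv, Qop, Eop, Fop, Dop, Matrix.toLin'_apply, Matrix.mulVec,
        dotProduct, Fin.sum_univ_two, qn_one, qn_neg_one]
    all_goals field_simp [hq]
    all_goals ring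
  · apply LinearMap.ext; intro v; funext i
    fin_cases i <;>
      simp [vop, Kinv, Qop, Eop, Fop, Dop, Matrix.toLin'_apply, Matrix.mulVec,
        dotProduct, Fin.sum_univ_two, qn_one, qn_neg_one]
    all_goals field_simp [hq]
    all_goals ring
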